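/- Let (L_0, v) be a valued field whose completion is its unique maximal immediate extension up to valuation-preserving isomorphism over L_0, and suppose L_0 is relatively algebraically closed in this completion. Then (L_0, v) is algebraically maximal, i.e., admits no nontrivial immediate algebraic extensions. -/

import Mathlib

universe u u' v

namespace VFD

variable {K : Type u} {L : Type v} [Field K] [Field L]
variable {Γ : Type*} [LinearOrderedCommGroupWithZero Γ]

/-- The value group of a valuation `v` on a field, as a subgroup of `Γˣ`:
the subgroup generated by all nonzero values of `v`. -/
def valueGroup (v : Valuation K Γ) : Subgroup Γˣ :=
  Subgroup.closure { γ : Γˣ | ∃ x : K, v x = γ }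

/-- The ramification index `(v L : v K)` of an extension of valued fields along `ι`. -/
noncomputable def ramIdx (ι : K →+* L) (vL : Valuation L Γ) : ℕ :=
  Subgroup.relIndex (valueGroup (vL.comap ι)) (valueGroup vL)

/-- The induced ring homomorphism between valuation rings. -/
def intHom (ι : K →+* L) (vL : Valuation L Γ) :
    (vL.comap ι).valuationSubring →+* vL.valuationSubring where
  toFun x := ⟨ι x, x.2⟩
  map_one' := by ext; simp
  map_mul' x y := by ext; simp
  map_zero' := by ext; simp
  map_add' x y := by ext; simp

theorem isLocalHom_intHom (ι : K →+* L) (vL : Valuation L Γ) :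
    IsLocalHom (intHom ι vL) := by
  constructor
  intro a ha
  have hK : (vL.comap ι).Integers (vL.comap ι).valuationSubring :=
    { hom_inj := Subtype.coe_injective
      map_le_one := fun r => r.2
      exists_of_le_one := fun r hr => ⟨⟨r, hr⟩, rfl⟩ }
  have hL : vL.Integers vL.valuationSubring :=
    { hom_inj := Subtype.coe_injective
      map_le_one := fun r => r.2
      exists_of_le_one := fun r hr => ⟨⟨r, hr⟩, rfl⟩ }
  rw [hK.isUnit_iff_valuation_eq_one]
  exact hL.isUnit_iff_valuation_eq_one.mp ha

/-- The induced homomorphism between residue fields. -/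
noncomputable def resMap (ι : K →+* L) (vL : Valuation L Γ) :
    IsLocalRing.ResidueField (vL.comap ι).valuationSubring →+*
      IsLocalRing.ResidueField vL.valuationSubring :=
  letI := isLocalHom_intHom ι vL
  IsLocalRing.ResidueField.map (intHom ι vL)

/-- The residue degree `[Lv : Kv]` of an extension of valued fields. -/
noncomputable def resDeg (ι : K →+* L) (vL : Valuation L Γ) : ℕ :=
  letI := (resMap ι vL).toAlgebra
  Module.finrank (IsLocalRing.ResidueField (vL.comap ι).valuationSubring)
    (IsLocalRing.ResidueField vL.valuationSubring)

/-- The defect `d(L|K,v) = [L:K] / ((vL : vK) [Lv : Kv])` of a finite extension of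
valued fields (by the Lemma of Ostrowski the division is exact for finite
unibranched extensions). -/
noncomputable def defect (ι : K →+* L) (vL : Valuation L Γ) : ℕ :=
  (letI := ι.toAlgebra; Module.finrank K L) / (ramIdx ι vL * resDeg ι vL)

/-- An extension of valued fields is unibranched if the valuation (subring) on `L`
is the unique one lying over the given valuation (subring) of `K`. -/
def Unibranched (ι : K →+* L) (vL : Valuation L Γ) : Prop :=
  ∀ B : ValuationSubring L, B.comap ι = vL.valuationSubring.comap ι →
    B = vL.valuationSubring

/-- An extension of valued fields is immediate if it induces no extension of the
value group nor of the residue field. -/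
def IsImmediate (ι : K →+* L) (vL : Valuation L Γ) : Prop :=
  (∀ y : L, ∃ x : K, vL (ι x) = vL y) ∧
    (∀ y : L, vL y ≤ 1 → ∃ x : K, vL (y - ι x) < 1)

/-- A valued field is maximal if it admits no proper immediate extension. -/
def IsMaximalValued (vK : Valuation K Γ) : Prop :=
  ∀ (L : Type u) [Field L] (ι : K →+* L) (Γ' : Type u')
    [LinearOrderedCommGroupWithZero Γ'] (vL : Valuation L Γ'),
    (vL.comap ι).IsEquiv vK → IsImmediate ι vL → Function.Surjective ι

/-- A valued field is algebraically maximal if it admits no proper immediate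
algebraic extension. -/
def IsAlgMaximal (vK : Valuation K Γ) : Prop :=
  ∀ (L : Type u) [Field L] (ι : K →+* L) (Γ' : Type u')
    [LinearOrderedCommGroupWithZero Γ'] (vL : Valuation L Γ'),
    (∀ y : L, letI := ι.toAlgebra; IsAlgebraic K y) →
    (vL.comap ι).IsEquiv vK → IsImmediate ι vL → Function.Surjective ι

/-- A henselian valued field is defectless if every finite unibranched extension
has defect 1. -/
def IsDefectless (vK : Valuation K Γ) : Prop :=
  ∀ (L : Type u) [Field L] (ι : K →+* L) (Γ' : Type u')
    [LinearOrderedCommGroupWithZero Γ'] (vL : Valuation L Γ'),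
    (letI := ι.toAlgebra; FiniteDimensional K L) →
    (vL.comap ι).IsEquiv vK → Unibranched ι vL → defect ι vL = 1

/-- A valued field is inseparably defectless if every finite purely inseparable
extension has defect 1. -/
def IsInsepDefectless (vK : Valuation K Γ) : Prop :=
  ∀ (L : Type u) [Field L] (ι : K →+* L) (Γ' : Type u')
    [LinearOrderedCommGroupWithZero Γ'] (vL : Valuation L Γ'),
    (letI := ι.toAlgebra; FiniteDimensional K L) →
    (letI := ι.toAlgebra; IsPurelyInseparable K L) →
    (vL.comap ι).IsEquiv vK → Unibranched ι vL → defect ι vL = 1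

/-- A valuation is discrete if its value group is a nontrivial cyclic group. -/
def IsDiscreteValued (v : Valuation K Γ) : Prop :=
  ∃ γ : Γˣ, γ ≠ 1 ∧ valueGroup v = Subgroup.zpowers γ

/-- A valued field is henselian if its valuation ring is a henselian local ring. -/
abbrev IsHenselianValued (v : Valuation K Γ) : Prop :=
  HenselianLocalRing v.valuationSubring

end VFD

namespace VFDProof

open VFD

section Transport

variable {K N : Type*} [Field K] [Field N]
variable {Γ : Type*} [LinearOrderedCommGroupWithZero Γ]
variable {Γ' : Type*} [LinearOrderedCommGroupWithZero Γ']

/-- Transport an immediate extension's valuation to the value monoid of the base. -/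
theorem exists_valuation_transport (vK : Valuation K Γ) (ι : K →+* N) (vN : Valuation N Γ')
    (hequiv : (vN.comap ι).IsEquiv vK) (himm : IsImmediate ι vN) :
    ∃ wN : Valuation N Γ, wN.comap ι = vK ∧ IsImmediate ι wN := by
  obtain ⟨m, hm⟩ : ∃ m : N → K, ∀ n, vN (ι (m n)) = vN n := ⟨fun n => (himm.1 n).choose,
    fun n => (himm.1 n).choose_spec⟩
  have hle : ∀ {a b : K}, vN (ι a) ≤ vN (ι b) ↔ vK a ≤ vK b := fun {a b} => hequiv a b
  have heq : ∀ {a b : K}, vN (ι a) = vN (ι b) ↔ vK a = vK b := fun {a b} =>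
    ⟨fun h => le_antisymm (hle.1 h.le) (hle.1 h.ge), fun h => le_antisymm (hle.2 h.le) (hle.2 h.ge)⟩
  have hlt : ∀ {a b : K}, vN (ι a) < vN (ι b) ↔ vK a < vK b := fun {a b} => by
    rw [lt_iff_not_ge, lt_iff_not_ge, not_iff_not]; exact hle
  set f : N → Γ := fun n => vK (m n) with hf
  have hfι : ∀ a : K, f (ι a) = vK a := fun a => heq.1 (by rw [hm])
  have hmono : ∀ {n n' : N}, vN n ≤ vN n' → f n ≤ f n' := by
    intro n n' h
    exact hle.1 (by rw [hm, hm]; exact h)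
  have hmonoeq : ∀ {n n' : N}, vN n = vN n' → f n = f n' := fun h =>
    le_antisymm (hmono h.le) (hmono h.ge)
  have hW : ∃ wN : Valuation N Γ, ∀ n, wN n = f n := by
    refine ⟨⟨⟨⟨f, ?_⟩, ?_, ?_⟩, ?_⟩, fun _ => rfl⟩
    · have h0 : vN (ι (m 0)) = vN 0 := hm 0
      rw [map_zero, Valuation.zero_iff, (injective_iff_map_eq_zero' ι).1 ι.injective] at h0
      show vK (m 0) = 0
      rw [h0, map_zero]
    · show f 1 = 1
      have : f (ι 1) = vK 1 := hfι 1
      simpa using this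
    · intro n n'
      show f (n * n') = f n * f n'
      have : f (n * n') = f (ι (m n * m n')) := hmonoeq
        (by rw [map_mul ι, vN.map_mul, vN.map_mul, hm, hm])
      rw [this, hfι, map_mul]
    · intro n n'
      show f (n + n') ≤ max (f n) (f n')
      rcases le_total (vN n) (vN n') with h | h
      · exact le_max_of_le_right (hmono ((vN.map_add n n').trans (by simpa using h)))
      · exact le_max_of_le_left (hmono ((vN.map_add n n').trans (by simpa using h)))
  obtain ⟨wN, hwN⟩ := hW
  have hcomap : wN.comap ι = vK := Valuation.ext fun a => by rw [Valuation.comap_apply, hwN, hfι]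
  refine ⟨wN, hcomap, ⟨fun n => ⟨m n, by rw [hwN, hwN, hfι]⟩, ?_⟩⟩
  intro n hn
  have hn' : vN n ≤ 1 := by
    have : vN (ι (m n)) ≤ vN (ι 1) := by
      rw [hle]
      rw [hwN] at hn
      simpa [hfι] using (by simpa [hf] using hn : vK (m n) ≤ 1)
    rw [hm, map_one, vN.map_one] at this
    exact this
  obtain ⟨x, hx⟩ := himm.2 n hn'
  refine ⟨x, ?_⟩
  have : vN (ι (m (n - ι x))) < vN (ι 1) := by rw [hm, map_one, vN.map_one]; exact hx
  rw [hlt, map_one] at this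
  rw [hwN]
  exact this

end Transport

section Comp

variable {K L N : Type*} [Field K] [Field L] [Field N]
variable {Γ' : Type*} [LinearOrderedCommGroupWithZero Γ']

theorem isImmediate_comp (ι₁ : K →+* L) (ι₂ : L →+* N) (vN : Valuation N Γ')
    (h₁ : IsImmediate ι₁ (vN.comap ι₂)) (h₂ : IsImmediate ι₂ vN) :
    IsImmediate (ι₂.comp ι₁) vN := by
  constructor
  · intro n
    obtain ⟨l, hl⟩ := h₂.1 n
    obtain ⟨k, hk⟩ := h₁.1 l
    exact ⟨k, by simpa [Valuation.comap_apply] using hk.trans hl⟩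
  · intro n hn
    obtain ⟨l, hl⟩ := h₂.2 n hn
    have hll : vN (ι₂ l) ≤ 1 := by
      have : vN (ι₂ l) = vN (n - (n - ι₂ l)) := by congr 1; ring
      rw [this]
      exact (vN.map_sub n (n - ι₂ l)).trans (max_le hn hl.le)
    obtain ⟨k, hk⟩ := h₁.2 l hll
    refine ⟨k, ?_⟩
    have hsub : n - (ι₂.comp ι₁) k = (n - ι₂ l) + ι₂ (l - ι₁ k) := by
      simp only [RingHom.comp_apply, map_sub]; ring
    rw [hsub]
    exact lt_of_le_of_lt (vN.map_add _ _) (max_lt hl (by simpa [Valuation.comap_apply] using hk))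

end Comp


section Gravett

variable {L N : Type*} [Field L] [Field N]
variable {Γ' : Type*} [LinearOrderedCommGroupWithZero Γ']

/-- Gravett–Krull cardinality bound: an immediate extension of `L` injects into `L → Set L`. -/
theorem exists_injection_of_immediate (J : L →+* N) (wN : Valuation N Γ')
    (himm : IsImmediate J wN) :
    ∃ Φ : N → (L → Set L), Function.Injective Φ := by
  classical
  set pick : Set N → N := fun s => if h : s.Nonempty then h.choose else 0 with hpick
  have pick_mem : ∀ (s : Set N), s.Nonempty → pick s ∈ s := by
    intro s hs; simp only [hpick, dif_pos hs]; exact hs.choose_spec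
  set cc : N → L → N := fun a t => pick {c | wN (a - c) ≤ wN (J t)} with hcc
  have hcmem : ∀ a t, wN (a - cc a t) ≤ wN (J t) := by
    intro a t
    have hne : ({c | wN (a - c) ≤ wN (J t)} : Set N).Nonempty := ⟨a, by simp⟩
    exact pick_mem _ hne
  refine ⟨fun a t => {x : L | wN ((a - cc a t) - J x * J t) < wN (J t)}, ?_⟩
  intro a b hab
  by_contra hne
  have hδ : wN (a - b) ≠ 0 := by
    rw [ne_eq, Valuation.zero_iff]; exact sub_ne_zero.2 hne
  obtain ⟨l, hJl⟩ := himm.1 (a - b)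
  have hS : {c : N | wN (a - c) ≤ wN (J l)} = {c : N | wN (b - c) ≤ wN (J l)} := by
    ext c
    simp only [Set.mem_setOf_eq]
    constructor
    · intro h
      have hbc : wN (b - c) = wN ((a - c) - (a - b)) := by congr 1; ring
      rw [hbc]
      exact (wN.map_sub _ _).trans (max_le h hJl.ge)
    · intro h
      have hac : wN (a - c) = wN ((b - c) + (a - b)) := by congr 1; ring
      rw [hac]
      exact (wN.map_add _ _).trans (max_le h hJl.ge)
  have hc : cc a l = cc b l := by
    simp only [hcc]
    rw [hS]
  have hwJl0 : wN (J l) ≠ 0 := by rw [hJl]; exact hδ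
  have hJl0 : J l ≠ 0 := fun h0 => hwJl0 (by rw [h0, map_zero])
  set u : N := (a - cc a l) / J l with hu
  have hu1 : wN u ≤ 1 := by
    rw [hu, wN.map_div]
    exact (div_le_one₀ (zero_lt_iff.2 hwJl0)).2 (hcmem a l)
  obtain ⟨x, hx⟩ := himm.2 u hu1
  have hxa : wN ((a - cc a l) - J x * J l) < wN (J l) := by
    have hrw : (a - cc a l) - J x * J l = (u - J x) * J l := by
      rw [hu, sub_mul, div_mul_cancel₀ _ hJl0]
    rw [hrw, wN.map_mul]
    calc wN (u - J x) * wN (J l) = wN (J l) * wN (u - J x) := mul_comm _ _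
      _ < wN (J l) * 1 := mul_lt_mul_of_pos_left hx (zero_lt_iff.2 hwJl0)
      _ = wN (J l) := mul_one _
  have hxb : ¬ (wN ((b - cc b l) - J x * J l) < wN (J l)) := by
    intro hxb
    have hlt : wN (a - b) < wN (J l) := by
      have heq2 : a - b = ((a - cc a l) - J x * J l) - ((b - cc b l) - J x * J l) := by
        rw [hc]; ring
      rw [heq2]
      exact lt_of_le_of_lt (wN.map_sub _ _) (max_lt hxa hxb)
    rw [hJl] at hlt; exact lt_irrefl _ hlt
  have hmem : x ∈ {x : L | wN ((a - cc a l) - J x * J l) < wN (J l)} := hxa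
  rw [show ({x : L | wN ((a - cc a l) - J x * J l) < wN (J l)}) =
      {x : L | wN ((b - cc b l) - J x * J l) < wN (J l)} from congrFun hab l] at hmem
  exact hxb hmem

end Gravett

section Extend

theorem exists_extend_embedding {S M N : Type u} (g : M → S) (hg : Function.Injective g)
    (ιN : M → N) (hιN : Function.Injective ιN)
    (hcard : Cardinal.mk N ≤ Cardinal.mk ((Set.range g)ᶜ : Set S)) :
    ∃ h : N → S, Function.Injective h ∧ ∀ m, h (ιN m) = g m := by
  classical
  obtain ⟨k⟩ : Nonempty (N ↪ ((Set.range g)ᶜ : Set S)) := Cardinal.le_def _ _ |>.1 hcard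
  refine ⟨fun n => if hn : ∃ m, ιN m = n then g hn.choose else (k n : S), ?_, ?_⟩
  · intro n₁ n₂ h12
    by_cases h1 : ∃ m, ιN m = n₁ <;> by_cases h2 : ∃ m, ιN m = n₂
    · simp only [dif_pos h1, dif_pos h2] at h12
      rw [← h1.choose_spec, ← h2.choose_spec, hg h12]
    · simp only [dif_pos h1, dif_neg h2] at h12
      exact absurd (h12 ▸ Set.mem_range_self h1.choose) (k n₂).2
    · simp only [dif_neg h1, dif_pos h2] at h12
      exact absurd (h12.symm ▸ Set.mem_range_self h2.choose) (k n₁).2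
    · simp only [dif_neg h1, dif_neg h2] at h12
      exact k.injective (Subtype.ext h12)
  · intro m
    have hm : ∃ m', ιN m' = ιN m := ⟨m, rfl⟩
    simp only [dif_pos hm]
    rw [hιN hm.choose_spec]

theorem card_compl_ge {L' S₀ M N : Type u} (g : M → (L' ⊕ Set S₀)) (hg : Function.Injective g)
    (hM : Cardinal.mk M ≤ Cardinal.mk S₀) (hN : Cardinal.mk N ≤ Cardinal.mk S₀)
    (hinf : Cardinal.aleph0 ≤ Cardinal.mk S₀) :
    Cardinal.mk N ≤ Cardinal.mk ((Set.range g)ᶜ : Set (L' ⊕ Set S₀)) := by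
  by_contra hcon
  push_neg at hcon
  have h1 : Cardinal.mk ((Set.range g)ᶜ : Set (L' ⊕ Set S₀)) ≤ Cardinal.mk S₀ := hcon.le.trans hN
  have h2 : Cardinal.mk (Set.range g : Set (L' ⊕ Set S₀)) ≤ Cardinal.mk S₀ :=
    (Cardinal.mk_range_eq g hg).trans_le hM
  have h3 : Cardinal.mk (L' ⊕ Set S₀) ≤ Cardinal.mk S₀ := by
    rw [← Cardinal.mk_sum_compl (Set.range g)]
    calc Cardinal.mk (Set.range g : Set (L' ⊕ Set S₀)) +
        Cardinal.mk ((Set.range g)ᶜ : Set (L' ⊕ Set S₀)) ≤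
        Cardinal.mk S₀ + Cardinal.mk S₀ := add_le_add h2 h1
      _ = Cardinal.mk S₀ := Cardinal.add_eq_self hinf
  have h4 : Cardinal.mk (Set S₀) ≤ Cardinal.mk (L' ⊕ Set S₀) :=
    Cardinal.mk_le_of_injective (Sum.inr_injective)
  have h5 : Cardinal.mk (Set S₀) ≤ Cardinal.mk S₀ := h4.trans h3
  rw [Cardinal.mk_set] at h5
  exact absurd h5 (Cardinal.cantor _).not_ge

end Extend


section Krull

variable {S L : Type u} [Field L] {Γ : Type u'} [LinearOrderedCommGroupWithZero Γ]

/-- A partial valued-field structure on subsets of an ambient set `S`, extending the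
valued field `(L, w)` as an immediate extension. -/
structure FD (S : Type u) (L : Type u) [Field L] (Γ : Type u')
    [LinearOrderedCommGroupWithZero Γ] (w : Valuation L Γ) where
  A : Set S
  add : S → S → S
  mul : S → S → S
  neg : S → S
  zero : S
  one : S
  val : S → Γ
  emb : L → S
  add_mem : ∀ {x y}, x ∈ A → y ∈ A → add x y ∈ A
  mul_mem : ∀ {x y}, x ∈ A → y ∈ A → mul x y ∈ A
  neg_mem : ∀ {x}, x ∈ A → neg x ∈ A
  zero_mem : zero ∈ A
  one_mem : one ∈ A
  emb_mem : ∀ x : L, emb x ∈ A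
  add_assoc' : ∀ {x y z}, x ∈ A → y ∈ A → z ∈ A → add (add x y) z = add x (add y z)
  add_comm' : ∀ {x y}, x ∈ A → y ∈ A → add x y = add y x
  zero_add' : ∀ {x}, x ∈ A → add zero x = x
  neg_add_cancel' : ∀ {x}, x ∈ A → add (neg x) x = zero
  mul_assoc' : ∀ {x y z}, x ∈ A → y ∈ A → z ∈ A → mul (mul x y) z = mul x (mul y z)
  mul_comm' : ∀ {x y}, x ∈ A → y ∈ A → mul x y = mul y x
  one_mul' : ∀ {x}, x ∈ A → mul one x = x
  left_distrib' : ∀ {x y z}, x ∈ A → y ∈ A → z ∈ A →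
    mul x (add y z) = add (mul x y) (mul x z)
  zero_mul' : ∀ {x}, x ∈ A → mul zero x = zero
  zero_ne_one' : zero ≠ one
  exists_inv : ∀ {x}, x ∈ A → x ≠ zero → ∃ y ∈ A, mul x y = one
  emb_add : ∀ x y : L, emb (x + y) = add (emb x) (emb y)
  emb_mul : ∀ x y : L, emb (x * y) = mul (emb x) (emb y)
  emb_one : emb 1 = one
  val_emb : ∀ x : L, val (emb x) = w x
  val_mul : ∀ {x y}, x ∈ A → y ∈ A → val (mul x y) = val x * val y
  val_add : ∀ {x y}, x ∈ A → y ∈ A → val (add x y) ≤ max (val x) (val y)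
  val_zero : val zero = 0
  val_one : val one = 1
  imm1 : ∀ {s}, s ∈ A → ∃ x : L, val (emb x) = val s
  imm2 : ∀ {s}, s ∈ A → val s ≤ 1 → ∃ x : L, val (add s (neg (emb x))) < 1

variable {w : Valuation L Γ}

/-- Extension order on partial structures. -/
structure FDLE (d₁ d₂ : FD S L Γ w) : Prop where
  sub : d₁.A ⊆ d₂.A
  add_eq : ∀ {x y}, x ∈ d₁.A → y ∈ d₁.A → d₂.add x y = d₁.add x y
  mul_eq : ∀ {x y}, x ∈ d₁.A → y ∈ d₁.A → d₂.mul x y = d₁.mul x y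
  neg_eq : ∀ {x}, x ∈ d₁.A → d₂.neg x = d₁.neg x
  zero_eq : d₂.zero = d₁.zero
  one_eq : d₂.one = d₁.one
  val_eq : ∀ {x}, x ∈ d₁.A → d₂.val x = d₁.val x
  emb_eq : d₂.emb = d₁.emb

theorem FDLE.refl (d : FD S L Γ w) : FDLE d d :=
  ⟨le_refl _, fun _ _ => rfl, fun _ _ => rfl, fun _ => rfl, rfl, rfl, fun _ => rfl, rfl⟩

theorem FDLE.trans {d₁ d₂ d₃ : FD S L Γ w} (h₁ : FDLE d₁ d₂) (h₂ : FDLE d₂ d₃) : FDLE d₁ d₃ where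
  sub := h₁.sub.trans h₂.sub
  add_eq hx hy := (h₂.add_eq (h₁.sub hx) (h₁.sub hy)).trans (h₁.add_eq hx hy)
  mul_eq hx hy := (h₂.mul_eq (h₁.sub hx) (h₁.sub hy)).trans (h₁.mul_eq hx hy)
  neg_eq hx := (h₂.neg_eq (h₁.sub hx)).trans (h₁.neg_eq hx)
  zero_eq := h₂.zero_eq.trans h₁.zero_eq
  one_eq := h₂.one_eq.trans h₁.one_eq
  val_eq hx := (h₂.val_eq (h₁.sub hx)).trans (h₁.val_eq hx)
  emb_eq := h₂.emb_eq.trans h₁.emb_eq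

/-- Pull back a valued field structure along an injection into the ambient set. -/
noncomputable def FD.ofInjective {N : Type u} [Field N]
    (wN : Valuation N Γ) (jL : L →+* N)
    (hcomap : wN.comap jL = w) (himm : IsImmediate jL wN)
    (h : N → S) (hinj : Function.Injective h) : FD S L Γ w := by
  haveI : Nonempty N := ⟨0⟩
  have hl : ∀ n : N, Function.invFun h (h n) = n := Function.leftInverse_invFun hinj
  have hw : ∀ x : L, wN (jL x) = w x := fun x => by
    rw [← hcomap]; rfl
  refine
  { A := Set.range h
    add := fun s t => h (Function.invFun h s + Function.invFun h t)
    mul := fun s t => h (Function.invFun h s * Function.invFun h t)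
    neg := fun s => h (-Function.invFun h s)
    zero := h 0
    one := h 1
    val := fun s => wN (Function.invFun h s)
    emb := fun x => h (jL x)
    add_mem := fun _ _ => Set.mem_range_self _
    mul_mem := fun _ _ => Set.mem_range_self _
    neg_mem := fun _ => Set.mem_range_self _
    zero_mem := Set.mem_range_self _
    one_mem := Set.mem_range_self _
    emb_mem := fun _ => Set.mem_range_self _
    add_assoc' := ?_
    add_comm' := ?_
    zero_add' := ?_
    neg_add_cancel' := ?_
    mul_assoc' := ?_
    mul_comm' := ?_
    one_mul' := ?_
    left_distrib' := ?_
    zero_mul' := ?_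
    zero_ne_one' := fun h01 => zero_ne_one (hinj h01)
    exists_inv := ?_
    emb_add := fun x y => by simp only [map_add, hl]
    emb_mul := fun x y => by simp only [map_mul, hl]
    emb_one := by show h (jL 1) = h 1; rw [map_one]
    val_emb := fun x => by show wN (Function.invFun h (h (jL x))) = w x; rw [hl, hw]
    val_mul := ?_
    val_add := ?_
    val_zero := by show wN (Function.invFun h (h 0)) = 0; rw [hl, map_zero]
    val_one := by show wN (Function.invFun h (h 1)) = 1; rw [hl, map_one]
    imm1 := ?_
    imm2 := ?_ }
  · rintro x y z ⟨a, rfl⟩ ⟨b, rfl⟩ ⟨c, rfl⟩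
    simp only [hl]
    rw [add_assoc]
  · rintro x y ⟨a, rfl⟩ ⟨b, rfl⟩
    simp only [hl]
    rw [add_comm]
  · rintro x ⟨a, rfl⟩
    simp only [hl]
    rw [zero_add]
  · rintro x ⟨a, rfl⟩
    simp only [hl]
    rw [neg_add_cancel]
  · rintro x y z ⟨a, rfl⟩ ⟨b, rfl⟩ ⟨c, rfl⟩
    simp only [hl]
    rw [mul_assoc]
  · rintro x y ⟨a, rfl⟩ ⟨b, rfl⟩
    simp only [hl]
    rw [mul_comm]
  · rintro x ⟨a, rfl⟩
    simp only [hl]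
    rw [one_mul]
  · rintro x y z ⟨a, rfl⟩ ⟨b, rfl⟩ ⟨c, rfl⟩
    simp only [hl]
    rw [left_distrib]
  · rintro x ⟨a, rfl⟩
    simp only [hl]
    rw [zero_mul]
  · rintro x ⟨a, rfl⟩ hx0
    refine ⟨h a⁻¹, Set.mem_range_self _, ?_⟩
    simp only [hl]
    rw [mul_inv_cancel₀ (fun h0 => hx0 (by rw [h0]))]
  · rintro x y ⟨a, rfl⟩ ⟨b, rfl⟩
    simp only [hl]
    exact wN.map_mul a b
  · rintro x y ⟨a, rfl⟩ ⟨b, rfl⟩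
    simp only [hl]
    exact wN.map_add a b
  · rintro s ⟨a, rfl⟩
    obtain ⟨x, hx⟩ := himm.1 a
    exact ⟨x, by simp only [hl]; exact hx⟩
  · rintro s ⟨a, rfl⟩ hs
    simp only [hl] at hs
    obtain ⟨x, hx⟩ := himm.2 a hs
    refine ⟨x, ?_⟩
    simp only [hl]
    rw [← sub_eq_add_neg]
    exact hx

theorem exists_ub_of_chain (c : Set (FD S L Γ w)) (hc : IsChain FDLE c) (hne : c.Nonempty) :
    ∃ ub, ∀ d ∈ c, FDLE d ub := by
  classical
  obtain ⟨e₀, he₀⟩ := hne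
  have hcomp : ∀ p ∈ c, ∀ q ∈ c, FDLE p q ∨ FDLE q p := by
    intro p hp q hq
    rcases eq_or_ne p q with rfl | hpq
    · exact Or.inl (FDLE.refl p)
    · exact hc hp hq hpq
  set UA : Set S := {x | ∃ p, p ∈ c ∧ x ∈ p.A} with hUA
  set uadd : S → S → S := fun x y =>
    if h : ∃ p, p ∈ c ∧ x ∈ p.A ∧ y ∈ p.A then h.choose.add x y else x with huadd
  set umul : S → S → S := fun x y =>
    if h : ∃ p, p ∈ c ∧ x ∈ p.A ∧ y ∈ p.A then h.choose.mul x y else x with humul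
  set uneg : S → S := fun x =>
    if h : ∃ p, p ∈ c ∧ x ∈ p.A then h.choose.neg x else x with huneg
  set uval : S → Γ := fun x =>
    if h : ∃ p, p ∈ c ∧ x ∈ p.A then h.choose.val x else 0 with huval
  have uadd_eq : ∀ p ∈ c, ∀ {x y}, x ∈ p.A → y ∈ p.A → uadd x y = p.add x y := by
    intro p hp x y hx hy
    have hex : ∃ q, q ∈ c ∧ x ∈ q.A ∧ y ∈ q.A := ⟨p, hp, hx, hy⟩
    simp only [huadd, dif_pos hex]
    obtain ⟨hqc, hqx, hqy⟩ := hex.choose_spec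
    rcases hcomp _ hqc p hp with h | h
    · exact (h.add_eq hqx hqy).symm
    · exact h.add_eq hx hy
  have umul_eq : ∀ p ∈ c, ∀ {x y}, x ∈ p.A → y ∈ p.A → umul x y = p.mul x y := by
    intro p hp x y hx hy
    have hex : ∃ q, q ∈ c ∧ x ∈ q.A ∧ y ∈ q.A := ⟨p, hp, hx, hy⟩
    simp only [humul, dif_pos hex]
    obtain ⟨hqc, hqx, hqy⟩ := hex.choose_spec
    rcases hcomp _ hqc p hp with h | h
    · exact (h.mul_eq hqx hqy).symm
    · exact h.mul_eq hx hy
  have uneg_eq : ∀ p ∈ c, ∀ {x}, x ∈ p.A → uneg x = p.neg x := by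
    intro p hp x hx
    have hex : ∃ q, q ∈ c ∧ x ∈ q.A := ⟨p, hp, hx⟩
    simp only [huneg, dif_pos hex]
    obtain ⟨hqc, hqx⟩ := hex.choose_spec
    rcases hcomp _ hqc p hp with h | h
    · exact (h.neg_eq hqx).symm
    · exact h.neg_eq hx
  have uval_eq : ∀ p ∈ c, ∀ {x}, x ∈ p.A → uval x = p.val x := by
    intro p hp x hx
    have hex : ∃ q, q ∈ c ∧ x ∈ q.A := ⟨p, hp, hx⟩
    simp only [huval, dif_pos hex]
    obtain ⟨hqc, hqx⟩ := hex.choose_spec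
    rcases hcomp _ hqc p hp with h | h
    · exact (h.val_eq hqx).symm
    · exact h.val_eq hx
  have uzero_eq : ∀ p ∈ c, p.zero = e₀.zero := by
    intro p hp
    rcases hcomp p hp e₀ he₀ with h | h
    · exact h.zero_eq.symm
    · exact h.zero_eq
  have uone_eq : ∀ p ∈ c, p.one = e₀.one := by
    intro p hp
    rcases hcomp p hp e₀ he₀ with h | h
    · exact h.one_eq.symm
    · exact h.one_eq
  have uemb_eq : ∀ p ∈ c, p.emb = e₀.emb := by
    intro p hp
    rcases hcomp p hp e₀ he₀ with h | h
    · exact h.emb_eq.symm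
    · exact h.emb_eq
  have dir2 : ∀ p ∈ c, ∀ q ∈ c, ∃ r, r ∈ c ∧ FDLE p r ∧ FDLE q r := by
    intro p hp q hq
    rcases hcomp p hp q hq with h | h
    · exact ⟨q, hq, h, FDLE.refl q⟩
    · exact ⟨p, hp, FDLE.refl p, h⟩
  have mem2 : ∀ {x y}, x ∈ UA → y ∈ UA → ∃ p, p ∈ c ∧ x ∈ p.A ∧ y ∈ p.A := by
    rintro x y ⟨p, hp, hx⟩ ⟨q, hq, hy⟩
    obtain ⟨r, hr, h1, h2⟩ := dir2 p hp q hq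
    exact ⟨r, hr, h1.sub hx, h2.sub hy⟩
  have mem3 : ∀ {x y z}, x ∈ UA → y ∈ UA → z ∈ UA →
      ∃ p, p ∈ c ∧ x ∈ p.A ∧ y ∈ p.A ∧ z ∈ p.A := by
    rintro x y z hx hy ⟨q, hq, hz⟩
    obtain ⟨p, hp, hx', hy'⟩ := mem2 hx hy
    obtain ⟨r, hr, h1, h2⟩ := dir2 p hp q hq
    exact ⟨r, hr, h1.sub hx', h1.sub hy', h2.sub hz⟩
  have memUA : ∀ {p x}, p ∈ c → x ∈ p.A → x ∈ UA := fun hp hx => ⟨_, hp, hx⟩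
  refine ⟨{
    A := UA
    add := uadd
    mul := umul
    neg := uneg
    zero := e₀.zero
    one := e₀.one
    val := uval
    emb := e₀.emb
    add_mem := ?_
    mul_mem := ?_
    neg_mem := ?_
    zero_mem := memUA he₀ e₀.zero_mem
    one_mem := memUA he₀ e₀.one_mem
    emb_mem := fun x => memUA he₀ (e₀.emb_mem x)
    add_assoc' := ?_
    add_comm' := ?_
    zero_add' := ?_
    neg_add_cancel' := ?_
    mul_assoc' := ?_
    mul_comm' := ?_
    one_mul' := ?_
    left_distrib' := ?_
    zero_mul' := ?_
    zero_ne_one' := e₀.zero_ne_one'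
    exists_inv := ?_
    emb_add := ?_
    emb_mul := ?_
    emb_one := e₀.emb_one
    val_emb := ?_
    val_mul := ?_
    val_add := ?_
    val_zero := ?_
    val_one := ?_
    imm1 := ?_
    imm2 := ?_ }, ?_⟩
  · intro x y hx hy
    obtain ⟨p, hp, hxp, hyp⟩ := mem2 hx hy
    rw [uadd_eq p hp hxp hyp]
    exact memUA hp (p.add_mem hxp hyp)
  · intro x y hx hy
    obtain ⟨p, hp, hxp, hyp⟩ := mem2 hx hy
    rw [umul_eq p hp hxp hyp]
    exact memUA hp (p.mul_mem hxp hyp)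
  · rintro x ⟨p, hp, hxp⟩
    rw [uneg_eq p hp hxp]
    exact memUA hp (p.neg_mem hxp)
  · intro x y z hx hy hz
    obtain ⟨p, hp, hxp, hyp, hzp⟩ := mem3 hx hy hz
    rw [uadd_eq p hp hxp hyp, uadd_eq p hp (p.add_mem hxp hyp) hzp,
      uadd_eq p hp hyp hzp, uadd_eq p hp hxp (p.add_mem hyp hzp), p.add_assoc' hxp hyp hzp]
  · intro x y hx hy
    obtain ⟨p, hp, hxp, hyp⟩ := mem2 hx hy
    rw [uadd_eq p hp hxp hyp, uadd_eq p hp hyp hxp, p.add_comm' hxp hyp]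
  · rintro x ⟨p, hp, hxp⟩
    rw [← uzero_eq p hp, uadd_eq p hp p.zero_mem hxp, p.zero_add' hxp]
  · rintro x ⟨p, hp, hxp⟩
    rw [uneg_eq p hp hxp, uadd_eq p hp (p.neg_mem hxp) hxp, p.neg_add_cancel' hxp,
      uzero_eq p hp]
  · intro x y z hx hy hz
    obtain ⟨p, hp, hxp, hyp, hzp⟩ := mem3 hx hy hz
    rw [umul_eq p hp hxp hyp, umul_eq p hp (p.mul_mem hxp hyp) hzp,
      umul_eq p hp hyp hzp, umul_eq p hp hxp (p.mul_mem hyp hzp), p.mul_assoc' hxp hyp hzp]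
  · intro x y hx hy
    obtain ⟨p, hp, hxp, hyp⟩ := mem2 hx hy
    rw [umul_eq p hp hxp hyp, umul_eq p hp hyp hxp, p.mul_comm' hxp hyp]
  · rintro x ⟨p, hp, hxp⟩
    rw [← uone_eq p hp, umul_eq p hp p.one_mem hxp, p.one_mul' hxp]
  · intro x y z hx hy hz
    obtain ⟨p, hp, hxp, hyp, hzp⟩ := mem3 hx hy hz
    rw [uadd_eq p hp hyp hzp, umul_eq p hp hxp (p.add_mem hyp hzp),
      umul_eq p hp hxp hyp, umul_eq p hp hxp hzp,
      uadd_eq p hp (p.mul_mem hxp hyp) (p.mul_mem hxp hzp), p.left_distrib' hxp hyp hzp]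
  · rintro x ⟨p, hp, hxp⟩
    rw [← uzero_eq p hp, umul_eq p hp p.zero_mem hxp, p.zero_mul' hxp, uzero_eq p hp]
  · rintro x ⟨p, hp, hxp⟩ hx0
    have hx0' : x ≠ p.zero := by
      rw [uzero_eq p hp]; exact hx0
    obtain ⟨y, hy, hmul⟩ := p.exists_inv hxp hx0'
    exact ⟨y, memUA hp hy, by rw [umul_eq p hp hxp hy, hmul, uone_eq p hp]⟩
  · intro x y
    rw [uadd_eq e₀ he₀ (e₀.emb_mem x) (e₀.emb_mem y)]
    exact e₀.emb_add x y
  · intro x y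
    rw [umul_eq e₀ he₀ (e₀.emb_mem x) (e₀.emb_mem y)]
    exact e₀.emb_mul x y
  · intro x
    rw [uval_eq e₀ he₀ (e₀.emb_mem x)]
    exact e₀.val_emb x
  · intro x y hx hy
    obtain ⟨p, hp, hxp, hyp⟩ := mem2 hx hy
    rw [umul_eq p hp hxp hyp, uval_eq p hp (p.mul_mem hxp hyp), uval_eq p hp hxp,
      uval_eq p hp hyp, p.val_mul hxp hyp]
  · intro x y hx hy
    obtain ⟨p, hp, hxp, hyp⟩ := mem2 hx hy
    rw [uadd_eq p hp hxp hyp, uval_eq p hp (p.add_mem hxp hyp), uval_eq p hp hxp,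
      uval_eq p hp hyp]
    exact p.val_add hxp hyp
  · rw [uval_eq e₀ he₀ e₀.zero_mem]
    exact e₀.val_zero
  · rw [uval_eq e₀ he₀ e₀.one_mem]
    exact e₀.val_one
  · rintro s ⟨p, hp, hsp⟩
    obtain ⟨x, hx⟩ := p.imm1 hsp
    refine ⟨x, ?_⟩
    rw [show e₀.emb = p.emb from (uemb_eq p hp).symm, uval_eq p hp (p.emb_mem x),
      uval_eq p hp hsp]
    exact hx
  · rintro s ⟨p, hp, hsp⟩ hs1
    rw [uval_eq p hp hsp] at hs1
    obtain ⟨x, hx⟩ := p.imm2 hsp hs1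
    refine ⟨x, ?_⟩
    rw [show e₀.emb = p.emb from (uemb_eq p hp).symm, uneg_eq p hp (p.emb_mem x),
      uadd_eq p hp hsp (p.neg_mem (p.emb_mem x)),
      uval_eq p hp (p.add_mem hsp (p.neg_mem (p.emb_mem x)))]
    exact hx
  · intro p hp
    exact {
      sub := fun {x} hx => memUA hp hx
      add_eq := fun hx hy => uadd_eq p hp hx hy
      mul_eq := fun hx hy => umul_eq p hp hx hy
      neg_eq := fun hx => uneg_eq p hp hx
      zero_eq := (uzero_eq p hp).symm
      one_eq := (uone_eq p hp).symm
      val_eq := fun hx => uval_eq p hp hx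
      emb_eq := (uemb_eq p hp).symm }


def FD.addI (d : FD S L Γ w) : Add ↥d.A := ⟨fun x y => ⟨d.add ↑x ↑y, d.add_mem x.2 y.2⟩⟩
def FD.mulI (d : FD S L Γ w) : Mul ↥d.A := ⟨fun x y => ⟨d.mul ↑x ↑y, d.mul_mem x.2 y.2⟩⟩
def FD.negI (d : FD S L Γ w) : Neg ↥d.A := ⟨fun x => ⟨d.neg ↑x, d.neg_mem x.2⟩⟩
def FD.zeroI (d : FD S L Γ w) : Zero ↥d.A := ⟨⟨d.zero, d.zero_mem⟩⟩
def FD.oneI (d : FD S L Γ w) : One ↥d.A := ⟨⟨d.one, d.one_mem⟩⟩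

attribute [local instance] FD.addI FD.mulI FD.negI FD.zeroI FD.oneI

noncomputable def FD.commRing (d : FD S L Γ w) : CommRing ↥d.A where
  add := (· + ·)
  zero := 0
  one := 1
  mul := (· * ·)
  neg := (- ·)
  nsmul := nsmulRec
  zsmul := zsmulRec
  add_assoc x y z := Subtype.ext (d.add_assoc' x.2 y.2 z.2)
  zero_add x := Subtype.ext (d.zero_add' x.2)
  add_zero x := Subtype.ext ((d.add_comm' x.2 d.zero_mem).trans (d.zero_add' x.2))
  add_comm x y := Subtype.ext (d.add_comm' x.2 y.2)
  neg_add_cancel x := Subtype.ext (d.neg_add_cancel' x.2)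
  mul_assoc x y z := Subtype.ext (d.mul_assoc' x.2 y.2 z.2)
  one_mul x := Subtype.ext (d.one_mul' x.2)
  mul_one x := Subtype.ext ((d.mul_comm' x.2 d.one_mem).trans (d.one_mul' x.2))
  left_distrib x y z := Subtype.ext (d.left_distrib' x.2 y.2 z.2)
  right_distrib x y z := Subtype.ext (by
    show d.mul (d.add ↑x ↑y) ↑z = d.add (d.mul ↑x ↑z) (d.mul ↑y ↑z)
    rw [d.mul_comm' (d.add_mem x.2 y.2) z.2, d.left_distrib' z.2 x.2 y.2,
      d.mul_comm' z.2 x.2, d.mul_comm' z.2 y.2])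
  zero_mul x := Subtype.ext (d.zero_mul' x.2)
  mul_zero x := Subtype.ext ((d.mul_comm' x.2 d.zero_mem).trans (d.zero_mul' x.2))
  mul_comm x y := Subtype.ext (d.mul_comm' x.2 y.2)

lemma FD.isField (d : FD S L Γ w) : letI := d.commRing; IsField ↥d.A := by
  letI := d.commRing
  refine ⟨⟨⟨d.zero, d.zero_mem⟩, ⟨d.one, d.one_mem⟩,
    fun h => d.zero_ne_one' (congrArg Subtype.val h)⟩,
    fun x y => Subtype.ext (d.mul_comm' x.2 y.2), ?_⟩
  intro a ha
  have ha' : (a : S) ≠ d.zero := fun h => ha (Subtype.ext h)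
  obtain ⟨y, hy, hmul⟩ := d.exists_inv a.2 ha'
  exact ⟨⟨y, hy⟩, Subtype.ext hmul⟩

noncomputable def FD.field (d : FD S L Γ w) : Field ↥d.A :=
  letI := d.commRing; (d.isField).toField

section Bundled

attribute [local instance] FD.field

variable (d : FD S L Γ w)

lemma FD.coe_add (x y : ↥d.A) : ((x + y : ↥d.A) : S) = d.add ↑x ↑y := rfl
lemma FD.coe_mul (x y : ↥d.A) : ((x * y : ↥d.A) : S) = d.mul ↑x ↑y := rfl
lemma FD.coe_neg (x : ↥d.A) : ((-x : ↥d.A) : S) = d.neg ↑x := rfl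
lemma FD.coe_zero : (((0 : ↥d.A)) : S) = d.zero := rfl
lemma FD.coe_one : (((1 : ↥d.A)) : S) = d.one := rfl
lemma FD.coe_sub (x y : ↥d.A) : ((x - y : ↥d.A) : S) = d.add ↑x (d.neg ↑y) := by
  rw [sub_eq_add_neg]; exact rfl

noncomputable def FD.vB : Valuation ↥d.A Γ :=
  ⟨⟨⟨fun x => d.val ↑x, by show d.val ((0 : ↥d.A) : S) = 0; rw [d.coe_zero, d.val_zero]⟩,
    by show d.val ((1 : ↥d.A) : S) = 1; rw [d.coe_one, d.val_one],
    fun x y => by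
      show d.val ((x * y : ↥d.A) : S) = d.val ↑x * d.val ↑y
      rw [d.coe_mul, d.val_mul x.2 y.2]⟩,
    fun x y => by
      show d.val ((x + y : ↥d.A) : S) ≤ max (d.val ↑x) (d.val ↑y)
      rw [d.coe_add]
      exact d.val_add x.2 y.2⟩

lemma FD.vB_apply (x : ↥d.A) : d.vB x = d.val ↑x := rfl

noncomputable def FD.jB : L →+* ↥d.A where
  toFun x := ⟨d.emb x, d.emb_mem x⟩
  map_one' := Subtype.ext d.emb_one
  map_mul' x y := Subtype.ext (d.emb_mul x y)
  map_add' x y := Subtype.ext (d.emb_add x y)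
  map_zero' := by
    have h2 : (⟨d.emb 0, d.emb_mem 0⟩ : ↥d.A) + ⟨d.emb 0, d.emb_mem 0⟩ =
        ⟨d.emb 0, d.emb_mem 0⟩ := Subtype.ext (by
      rw [d.coe_add]
      show d.add (d.emb 0) (d.emb 0) = d.emb 0
      rw [← d.emb_add]
      norm_num)
    have h2' : d.add (d.emb 0) (d.emb 0) = d.emb 0 := congrArg Subtype.val h2
    exact Subtype.ext (by
      show d.emb 0 = d.zero
      have e := d.emb_mem 0
      calc d.emb 0 = d.add d.zero (d.emb 0) := (d.zero_add' e).symm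
        _ = d.add (d.add (d.neg (d.emb 0)) (d.emb 0)) (d.emb 0) := by rw [d.neg_add_cancel' e]
        _ = d.add (d.neg (d.emb 0)) (d.add (d.emb 0) (d.emb 0)) := d.add_assoc' (d.neg_mem e) e e
        _ = d.zero := by rw [h2', d.neg_add_cancel' e])

lemma FD.jB_coe (x : L) : ((d.jB x : ↥d.A) : S) = d.emb x := rfl

lemma FD.vB_comap : (d.vB).comap d.jB = w :=
  Valuation.ext fun x => d.val_emb x

lemma FD.immB : IsImmediate d.jB d.vB := by
  constructor
  · rintro ⟨s, hs⟩
    obtain ⟨x, hx⟩ := d.imm1 hs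
    exact ⟨x, hx⟩
  · rintro ⟨s, hs⟩ h1
    obtain ⟨x, hx⟩ := d.imm2 hs h1
    refine ⟨x, ?_⟩
    show d.val _ < 1
    rw [d.coe_sub]
    exact hx

end Bundled

end Krull


end VFDProof


namespace VFDProof
open VFD
section OfInjLemmas
variable {S L : Type u} [Field L] {Γ : Type u'} [LinearOrderedCommGroupWithZero Γ]
  {w : Valuation L Γ} {N : Type u} [Field N] (wN : Valuation N Γ) (jL : L →+* N)
  (hcomap : wN.comap jL = w) (himm : VFD.IsImmediate jL wN)
  (h : N → S) (hinj : Function.Injective h)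

lemma FD.ofInjective_A : (FD.ofInjective wN jL hcomap himm h hinj).A = Set.range h := rfl
lemma FD.ofInjective_add : (FD.ofInjective wN jL hcomap himm h hinj).add =
    fun s t => h (Function.invFun h s + Function.invFun h t) := rfl
lemma FD.ofInjective_mul : (FD.ofInjective wN jL hcomap himm h hinj).mul =
    fun s t => h (Function.invFun h s * Function.invFun h t) := rfl
lemma FD.ofInjective_neg : (FD.ofInjective wN jL hcomap himm h hinj).neg =
    fun s => h (-Function.invFun h s) := rfl
lemma FD.ofInjective_zero : (FD.ofInjective wN jL hcomap himm h hinj).zero = h 0 := rfl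
lemma FD.ofInjective_one : (FD.ofInjective wN jL hcomap himm h hinj).one = h 1 := rfl
lemma FD.ofInjective_val : (FD.ofInjective wN jL hcomap himm h hinj).val =
    fun s => wN (Function.invFun h s) := rfl
lemma FD.ofInjective_emb : (FD.ofInjective wN jL hcomap himm h hinj).emb =
    fun x => h (jL x) := rfl
end OfInjLemmas
end VFDProof


/-- Let `(L₀, v)` be a valued field admitting an immediate extension `(C, vC)`
which is a maximal valued field and is the unique maximal immediate extension
of `(L₀, v)` up to valuation-preserving isomorphism over `L₀` (e.g. the
completion of a suitable `(L₀,v)`), and suppose `L₀` is relatively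
algebraically closed in `C`. Then `(L₀, v)` is algebraically maximal. -/
theorem algMaximal_of_unique_maximal_immediate
    {L₀ : Type u} [Field L₀] {Γ : Type u'} [LinearOrderedCommGroupWithZero Γ]
    (v : Valuation L₀ Γ) (C : Type u) [Field C] (ι : L₀ →+* C)
    (vC : Valuation C Γ)
    (hext : (vC.comap ι).IsEquiv v) (himm : VFD.IsImmediate ι vC)
    (hmax : VFD.IsMaximalValued.{u, u'} vC)
    (huniq : ∀ (M : Type u) [Field M] (ιM : L₀ →+* M) (vM : Valuation M Γ),
      (vM.comap ιM).IsEquiv v → VFD.IsImmediate ιM vM →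
      VFD.IsMaximalValued.{u, u'} vM →
      ∃ σ : M ≃+* C, (σ : M →+* C).comp ιM = ι ∧
        (vC.comap (σ : M →+* C)).IsEquiv vM)
    (hrel : ∀ c : C, (letI := ι.toAlgebra; IsAlgebraic L₀ c) → c ∈ ι.range) :
    VFD.IsAlgMaximal.{u, u'} v := by
  classical
  intro L1 instL1 ι' Γ' instΓ' vL halg hequiv himmL
  open VFDProof in
  -- Step 1: transport the valuation of the immediate extension into Γ
  obtain ⟨w, hwcomap, hwimm⟩ := VFDProof.exists_valuation_transport v ι' vL hequiv himmL
  -- Step 2: Zorn's lemma over partial immediate extension structures of (L1, w)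
  have hidimm : VFD.IsImmediate (RingHom.id L1) w := by
    constructor
    · exact fun y => ⟨y, rfl⟩
    · intro y _
      refine ⟨y, ?_⟩
      rw [RingHom.id_apply, sub_self, w.map_zero]
      exact zero_lt_one
  haveI hne : Nonempty (VFDProof.FD (L1 ⊕ Set ((L1 → Set L1) ⊕ ℕ)) L1 Γ w) :=
    ⟨VFDProof.FD.ofInjective w (RingHom.id L1) (Valuation.comap_id w) hidimm
      Sum.inl Sum.inl_injective⟩
  obtain ⟨dm, hdm⟩ : ∃ m : VFDProof.FD (L1 ⊕ Set ((L1 → Set L1) ⊕ ℕ)) L1 Γ w,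
      ∀ a, VFDProof.FDLE m a → VFDProof.FDLE a m :=
    exists_maximal_of_nonempty_chains_bounded
      (fun c hc hcne => VFDProof.exists_ub_of_chain c hc hcne)
      (fun h1 h2 => VFDProof.FDLE.trans h1 h2)
  letI instF : Field ↥dm.A := dm.field
  have hMcomap : (dm.vB).comap dm.jB = w := dm.vB_comap
  have hMimm : VFD.IsImmediate dm.jB dm.vB := dm.immB
  -- Step 3: the maximal structure is a maximal valued field
  have hmaxM : VFD.IsMaximalValued.{u, u'} dm.vB := by
    intro N instN ιN Γ'' instΓ'' vN hNequiv hNimm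
    obtain ⟨wN, hwNcomap, hwNimm⟩ :=
      VFDProof.exists_valuation_transport dm.vB ιN vN hNequiv hNimm
    have hJimm : VFD.IsImmediate (ιN.comp dm.jB) wN :=
      VFDProof.isImmediate_comp dm.jB ιN wN (by rw [hwNcomap]; exact hMimm) hwNimm
    have hJcomap : wN.comap (ιN.comp dm.jB) = w := by
      rw [Valuation.comap_comp, hwNcomap, hMcomap]
    obtain ⟨ΦN, hΦN⟩ := VFDProof.exists_injection_of_immediate (ιN.comp dm.jB) wN hJimm
    obtain ⟨ΦM, hΦM⟩ := VFDProof.exists_injection_of_immediate dm.jB dm.vB hMimm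
    have hNcard : Cardinal.mk N ≤ Cardinal.mk ((L1 → Set L1) ⊕ ℕ) :=
      Cardinal.mk_le_of_injective (f := fun n => (Sum.inl (ΦN n) : (L1 → Set L1) ⊕ ℕ))
        (fun a b hab => hΦN (by injection hab))
    have hMcard : Cardinal.mk ↥dm.A ≤ Cardinal.mk ((L1 → Set L1) ⊕ ℕ) :=
      Cardinal.mk_le_of_injective (f := fun n => (Sum.inl (ΦM n) : (L1 → Set L1) ⊕ ℕ))
        (fun a b hab => hΦM (by injection hab))
    have hinf : Cardinal.aleph0 ≤ Cardinal.mk ((L1 → Set L1) ⊕ ℕ) :=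
      Cardinal.aleph0_le_mk _
    have hcard := VFDProof.card_compl_ge (fun m : ↥dm.A => (m : L1 ⊕ Set ((L1 → Set L1) ⊕ ℕ)))
      Subtype.val_injective hMcard hNcard hinf
    obtain ⟨hh, hhinj, hhext⟩ := VFDProof.exists_extend_embedding _ Subtype.val_injective
      ιN ιN.injective hcard
    have hinvh : ∀ n : N, Function.invFun hh (hh n) = n := Function.leftInverse_invFun hhinj
    have hinvm : ∀ m : ↥dm.A, Function.invFun hh ((m : L1 ⊕ Set ((L1 → Set L1) ⊕ ℕ))) = ιN m := by
      intro m
      rw [← hhext m, hinvh]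
    have hle : VFDProof.FDLE dm (VFDProof.FD.ofInjective wN (ιN.comp dm.jB) hJcomap hJimm hh hhinj) := by
      constructor
      · intro x hx
        rw [VFDProof.FD.ofInjective_A]
        exact ⟨ιN ⟨x, hx⟩, hhext ⟨x, hx⟩⟩
      · intro x y hx hy
        rw [VFDProof.FD.ofInjective_add]
        show hh (Function.invFun hh x + Function.invFun hh y) = dm.add x y
        rw [show x = ((⟨x, hx⟩ : ↥dm.A) : L1 ⊕ Set ((L1 → Set L1) ⊕ ℕ)) from rfl,
          show y = ((⟨y, hy⟩ : ↥dm.A) : L1 ⊕ Set ((L1 → Set L1) ⊕ ℕ)) from rfl,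
          hinvm, hinvm, ← map_add, hhext]; rfl
      · intro x y hx hy
        rw [VFDProof.FD.ofInjective_mul]
        show hh (Function.invFun hh x * Function.invFun hh y) = dm.mul x y
        rw [show x = ((⟨x, hx⟩ : ↥dm.A) : L1 ⊕ Set ((L1 → Set L1) ⊕ ℕ)) from rfl,
          show y = ((⟨y, hy⟩ : ↥dm.A) : L1 ⊕ Set ((L1 → Set L1) ⊕ ℕ)) from rfl,
          hinvm, hinvm, ← map_mul, hhext]; rfl
      · intro x hx
        rw [VFDProof.FD.ofInjective_neg]
        show hh (-Function.invFun hh x) = dm.neg x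
        rw [show x = ((⟨x, hx⟩ : ↥dm.A) : L1 ⊕ Set ((L1 → Set L1) ⊕ ℕ)) from rfl,
          hinvm, ← map_neg, hhext]; rfl
      · rw [VFDProof.FD.ofInjective_zero, ← map_zero ιN, hhext]; rfl
      · rw [VFDProof.FD.ofInjective_one, ← map_one ιN, hhext]; rfl
      · intro x hx
        rw [VFDProof.FD.ofInjective_val]
        show wN (Function.invFun hh x) = dm.val x
        rw [show x = ((⟨x, hx⟩ : ↥dm.A) : L1 ⊕ Set ((L1 → Set L1) ⊕ ℕ)) from rfl, hinvm]
        have : wN (ιN ⟨x, hx⟩) = dm.vB ⟨x, hx⟩ := by rw [← hwNcomap]; rfl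
        rw [this, dm.vB_apply]
      · rw [VFDProof.FD.ofInjective_emb]
        funext x
        show hh (ιN (dm.jB x)) = dm.emb x
        rw [hhext, dm.jB_coe]
    have hge := hdm _ hle
    intro n
    have hmem : hh n ∈ dm.A := by
      have := hge.sub
      rw [VFDProof.FD.ofInjective_A] at this
      exact this ⟨n, rfl⟩
    refine ⟨⟨hh n, hmem⟩, ?_⟩
    apply hhinj
    rw [hhext ⟨hh n, hmem⟩]
  -- Step 4: by uniqueness, the maximal structure is isomorphic to C over L₀
  have hcomapM : (dm.vB).comap (dm.jB.comp ι') = v := by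
    rw [Valuation.comap_comp, hMcomap, hwcomap]
  obtain ⟨σ, hσcomp, hσequiv⟩ := huniq ↥dm.A (dm.jB.comp ι') dm.vB
    (Valuation.IsEquiv.of_eq hcomapM)
    (VFDProof.isImmediate_comp ι' dm.jB dm.vB (by rw [hMcomap]; exact hwimm) hMimm)
    hmaxM
  -- Step 5: relative algebraic closedness forces surjectivity
  intro y
  obtain ⟨p, hp0, hpy⟩ := halg y
  have hpy' : Polynomial.eval₂ ι' y p = 0 := by
    letI : Algebra L₀ L1 := ι'.toAlgebra
    rw [Polynomial.aeval_def, RingHom.algebraMap_toAlgebra] at hpy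
    exact hpy
  have hcomm := Polynomial.hom_eval₂ p ι' ((σ : ↥dm.A →+* C).comp dm.jB) y
  rw [hpy', map_zero] at hcomm
  have hφι : ((σ : ↥dm.A →+* C).comp dm.jB).comp ι' = ι := by
    rw [RingHom.comp_assoc]
    exact hσcomp
  rw [hφι] at hcomm
  have halgC : (letI := ι.toAlgebra; IsAlgebraic L₀ (σ (dm.jB y))) := by
    letI := ι.toAlgebra
    refine ⟨p, hp0, ?_⟩
    rw [Polynomial.aeval_def, RingHom.algebraMap_toAlgebra]
    exact hcomm.symm
  obtain ⟨x, hx⟩ := hrel (σ (dm.jB y)) halgC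
  refine ⟨x, ?_⟩
  have h1 : σ (dm.jB (ι' x)) = ι x := RingHom.congr_fun hσcomp x
  have h2 : σ (dm.jB (ι' x)) = σ (dm.jB y) := by rw [h1, hx]
  exact dm.jB.injective (σ.injective h2)
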